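/- Let G = (V, E) be a cubic finite simple graph. Let (V^1, V^2) be a partition of V such that every vertex has at most one neighbor in its own part. Let t* be the maximum cardinality of a family of pairwise vertex-disjoint, pairwise non-adjacent triangles of G, and let 𝒯 be such a family with 6|𝒯| ≥ 5·t*. Then F₁ = V ∖ V^i (where V^i is the larger of V^1, V^2) and F₂ = V minus the vertices on triangles of 𝒯 are both 4-path vertex covers of G, and min{|F₁|, |F₂|} ≤ (15/8)·ψ_4(G). -/

import Mathlib

open SimpleGraph

/-- `G` contains a path of order `k` (i.e., with `k` vertices). -/
def HasPathOfOrder {V : Type*} (G : SimpleGraph V) (k : ℕ) : Prop :=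
  ∃ (u v : V) (w : G.Walk u v), w.IsPath ∧ w.length + 1 = k

/-- `F` is a `k`-path vertex cover of `G`: the subgraph induced on the
complement of `F` contains no path of order `k`. -/
def IsPathVertexCover {V : Type*} (G : SimpleGraph V) (k : ℕ) (F : Finset V) : Prop :=
  ¬ HasPathOfOrder (G.induce ((↑F : Set V)ᶜ)) k

/-- `psi G k` is the minimum cardinality of a `k`-path vertex cover of `G`. -/
noncomputable def psi {V : Type*} [Fintype V] (G : SimpleGraph V) (k : ℕ) : ℕ :=
  sInf {n | ∃ F : Finset V, IsPathVertexCover G k F ∧ F.card = n}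

section Helpers
open Finset
variable {V : Type*}

lemma build_p4 {G : SimpleGraph V} {S : Set V}
    (h : ¬ HasPathOfOrder (G.induce S) 4) {a b c d : V}
    (ha : a ∈ S) (hb : b ∈ S) (hc : c ∈ S) (hd : d ∈ S)
    (hab : a ≠ b) (hac : a ≠ c) (had : a ≠ d) (hbc : b ≠ c) (hbd : b ≠ d)
    (hcd : c ≠ d) (e1 : G.Adj a b) (e2 : G.Adj b c) (e3 : G.Adj c d) : False := by
  apply h
  have A1 : (G.induce S).Adj ⟨a, ha⟩ ⟨b, hb⟩ := e1
  have A2 : (G.induce S).Adj ⟨b, hb⟩ ⟨c, hc⟩ := e2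
  have A3 : (G.induce S).Adj ⟨c, hc⟩ ⟨d, hd⟩ := e3
  refine ⟨⟨a, ha⟩, ⟨d, hd⟩, Walk.cons A1 (Walk.cons A2 (Walk.cons A3 Walk.nil)), ?_, by simp⟩
  simp [Walk.isPath_def, Subtype.ext_iff, hab, hac, had, hbc, hbd, hcd]

lemma lower_bound [Fintype V] [DecidableEq V] (G : SimpleGraph V) [DecidableRel G.Adj]
    (hcubic : G.IsRegularOfDegree 3) (tstar : ℕ)
    (hub : ∀ 𝒯 : Finset (Finset V), (∀ s ∈ 𝒯, G.IsNClique 3 s) →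
      (∀ s ∈ 𝒯, ∀ t ∈ 𝒯, s ≠ t → Disjoint s t) →
      (∀ s ∈ 𝒯, ∀ t ∈ 𝒯, s ≠ t → ∀ u ∈ s, ∀ v ∈ t, ¬G.Adj u v) → 𝒯.card ≤ tstar)
    (F : Finset V) (hF : IsPathVertexCover G 4 F) :
    Fintype.card V ≤ 3 * F.card + tstar := by
  classical
  set S : Finset V := Fᶜ with hSdef
  have hScoe : ((↑F : Set V)ᶜ) = (↑S : Set V) := by simp [hSdef]
  rw [IsPathVertexCover, hScoe] at hF
  -- no-P4 in finset form
  have np : ∀ a b c d : V, a ∈ S → b ∈ S → c ∈ S → d ∈ S →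
      a ≠ b → a ≠ c → a ≠ d → b ≠ c → b ≠ d → c ≠ d →
      G.Adj a b → G.Adj b c → G.Adj c d → False := by
    intro a b c d ha hb hc hd h1 h2 h3 h4 h5 h6 e1 e2 e3
    exact build_p4 hF (by simpa using ha) (by simpa using hb) (by simpa using hc)
      (by simpa using hd) h1 h2 h3 h4 h5 h6 e1 e2 e3
  have deg3 : ∀ v : V, (G.neighborFinset v).card = 3 := hcubic
  set d : V → ℕ := fun v => (G.neighborFinset v ∩ S).card with hd
  -- triangle vertices
  set p : V → Prop := fun v => ∃ u ∈ S, ∃ w ∈ S, G.Adj v u ∧ G.Adj v w ∧ G.Adj u w with hp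
  set A : Finset V := S.filter p with hA
  have hAS : A ⊆ S := Finset.filter_subset _ _
  -- key structure of A
  have hNA : ∀ v ∈ A, ∀ u ∈ S, ∀ w ∈ S, G.Adj v u → G.Adj v w → G.Adj u w →
      G.neighborFinset v ∩ S = {u, w} := by
    intro v hv u hu w hw avu avw auw
    have hvS : v ∈ S := hAS hv
    apply Finset.Subset.antisymm
    · intro x hx
      simp only [Finset.mem_inter, SimpleGraph.mem_neighborFinset] at hx
      by_contra hxuw
      simp only [Finset.mem_insert, Finset.mem_singleton, not_or] at hxuw
      exact np x v u w hx.2 hvS hu hw (hx.1.ne') hxuw.1 hxuw.2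
        avu.ne avw.ne auw.ne hx.1.symm avu auw
    · intro x hx
      simp only [Finset.mem_insert, Finset.mem_singleton] at hx
      rcases hx with rfl | rfl <;>
        simp [Finset.mem_inter, SimpleGraph.mem_neighborFinset, avu, avw, hu, hw]
  have key : ∀ v ∈ A, ∃ u w, u ∈ S ∧ w ∈ S ∧ G.Adj v u ∧ G.Adj v w ∧ G.Adj u w ∧
      G.neighborFinset v ∩ S = {u, w} := by
    intro v hv
    obtain ⟨hvS, u, hu, w, hw, avu, avw, auw⟩ := Finset.mem_filter.1 hv
    exact ⟨u, w, hu, hw, avu, avw, auw, hNA v hv u hu w hw avu avw auw⟩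
  -- each triangle-vertex's triangle
  set Tr : V → Finset V := fun v => insert v (G.neighborFinset v ∩ S) with hTr
  have hmemT : ∀ v ∈ A, ∀ y ∈ Tr v, y ∈ A ∧ Tr y = Tr v := by
    intro v hv y hy
    obtain ⟨u, w, hu, hw, avu, avw, auw, hN⟩ := key v hv
    have hvS : v ∈ S := hAS hv
    rw [hTr] at hy ⊢
    simp only [hN, Finset.mem_insert, Finset.mem_singleton] at hy
    rcases hy with rfl | rfl | rfl
    · exact ⟨hv, rfl⟩
    · have hyA : y ∈ A := Finset.mem_filter.2 ⟨hu, v, hvS, w, hw, avu.symm, auw, avw⟩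
      have hNy := hNA y hyA v hvS w hw avu.symm auw avw
      refine ⟨hyA, ?_⟩
      simp only [hN, hNy]
      ext z; simp only [Finset.mem_insert, Finset.mem_singleton]; tauto
    · have hyA : y ∈ A := Finset.mem_filter.2 ⟨hw, v, hvS, u, hu, avw.symm, auw.symm, avu⟩
      have hNy := hNA y hyA v hvS u hu avw.symm auw.symm avu
      refine ⟨hyA, ?_⟩
      simp only [hN, hNy]
      ext z; simp only [Finset.mem_insert, Finset.mem_singleton]; tauto
  have hTsub : ∀ v ∈ A, Tr v ⊆ S := by
    intro v hv
    rw [hTr]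
    exact Finset.insert_subset (hAS hv) (Finset.inter_subset_right)
  have hTmem : ∀ v ∈ A, v ∈ Tr v := fun v _ => Finset.mem_insert_self _ _
  have hTclique : ∀ v ∈ A, G.IsNClique 3 (Tr v) := by
    intro v hv
    obtain ⟨u, w, hu, hw, avu, avw, auw, hN⟩ := key v hv
    have : Tr v = {v, u, w} := by rw [hTr]; simp [hN]
    rw [this, SimpleGraph.is3Clique_triple_iff]
    exact ⟨avu, avw, auw⟩
  -- the triangle family
  set 𝒯A : Finset (Finset V) := A.image Tr with h𝒯A
  have hdisj𝒯 : ∀ s ∈ 𝒯A, ∀ t ∈ 𝒯A, s ≠ t → Disjoint s t := by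
    intro s hs t ht hst
    obtain ⟨v, hv, rfl⟩ := Finset.mem_image.1 hs
    obtain ⟨x, hx, rfl⟩ := Finset.mem_image.1 ht
    rw [Finset.disjoint_left]
    intro y hys hyt
    exact hst (((hmemT v hv y hys).2).symm.trans ((hmemT x hx y hyt).2))
  have hnadj𝒯 : ∀ s ∈ 𝒯A, ∀ t ∈ 𝒯A, s ≠ t → ∀ u ∈ s, ∀ x ∈ t, ¬G.Adj u x := by
    intro s hs t ht hst u hu x hx hadj
    obtain ⟨v, hv, rfl⟩ := Finset.mem_image.1 hs
    obtain ⟨z, hz, rfl⟩ := Finset.mem_image.1 ht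
    obtain ⟨huA, huT⟩ := hmemT v hv u hu
    have hxS : x ∈ S := hTsub z hz hx
    have hxTu : x ∈ Tr u := by
      rw [hTr]
      exact Finset.mem_insert_of_mem (Finset.mem_inter.2 ⟨(SimpleGraph.mem_neighborFinset G u x).2 hadj, hxS⟩)
    rw [huT] at hxTu
    exact (Finset.disjoint_left.1 (hdisj𝒯 _ hs _ ht hst) hxTu) hx
  have hclique𝒯 : ∀ s ∈ 𝒯A, G.IsNClique 3 s := by
    intro s hs
    obtain ⟨v, hv, rfl⟩ := Finset.mem_image.1 hs
    exact hTclique v hv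
  have h𝒯bound : 𝒯A.card ≤ tstar := hub 𝒯A hclique𝒯 hdisj𝒯 hnadj𝒯
  -- A is the union of the triangles
  have hAeq : A = 𝒯A.biUnion id := by
    ext y
    simp only [Finset.mem_biUnion, h𝒯A, Finset.mem_image, id]
    constructor
    · intro hy; exact ⟨Tr y, ⟨y, hy, rfl⟩, hTmem y hy⟩
    · rintro ⟨s, ⟨v, hv, rfl⟩, hy⟩; exact (hmemT v hv y hy).1
  have hAcard : A.card = 3 * 𝒯A.card := by
    have hcb : (𝒯A.biUnion id).card = ∑ s ∈ 𝒯A, (id s).card :=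
      Finset.card_biUnion (fun s hs t ht hst => hdisj𝒯 s hs t ht hst)
    rw [hAeq, hcb]
    rw [Finset.sum_congr rfl (fun s hs => show (id s).card = 3 from (hclique𝒯 s hs).2)]
    simp [Nat.mul_comm]
  have hAbound : A.card ≤ 3 * tstar := by
    rw [hAcard]; omega
  -- S' : star forest part
  set S' : Finset V := S \ A with hS'
  have hS'S : S' ⊆ S := Finset.sdiff_subset
  have hAonly : ∀ v ∈ A, ∀ x, G.Adj v x → x ∈ S → x ∈ A := by
    intro v hv x hadj hxS
    obtain ⟨u, w, hu, hw, avu, avw, auw, hN⟩ := key v hv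
    have hxT : x ∈ Tr v := by
      rw [hTr]
      exact Finset.mem_insert_of_mem (Finset.mem_inter.2
        ⟨(SimpleGraph.mem_neighborFinset G v x).2 hadj, hxS⟩)
    exact (hmemT v hv x hxT).1
  have hNS' : ∀ v ∈ S', G.neighborFinset v ∩ S = G.neighborFinset v ∩ S' := by
    intro v hv
    ext x
    simp only [Finset.mem_inter, SimpleGraph.mem_neighborFinset]
    constructor
    · rintro ⟨hadj, hxS⟩
      refine ⟨hadj, Finset.mem_sdiff.2 ⟨hxS, fun hxA => ?_⟩⟩
      exact (Finset.mem_sdiff.1 hv).2 (hAonly x hxA v hadj.symm (hS'S hv))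
    · rintro ⟨hadj, hxS'⟩
      exact ⟨hadj, hS'S hxS'⟩
  set d' : V → ℕ := fun v => (G.neighborFinset v ∩ S').card with hd'
  have hd'd : ∀ v ∈ S', d' v = d v := by
    intro v hv; simp only [hd', hd]; rw [← hNS' v hv]
  have hd'le : ∀ v : V, d' v ≤ 3 := by
    intro v
    calc d' v ≤ (G.neighborFinset v).card := Finset.card_le_card Finset.inter_subset_left
      _ = 3 := deg3 v
  -- key degree fact in star forest
  have K : ∀ v ∈ S', 2 ≤ d' v → ∀ u, G.Adj v u → u ∈ S' → d' u = 1 := by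
    intro v hv h2 u hadj huS'
    have huN : u ∈ G.neighborFinset v ∩ S' := Finset.mem_inter.2
      ⟨(SimpleGraph.mem_neighborFinset G v u).2 hadj, huS'⟩
    have hvN : v ∈ G.neighborFinset u ∩ S' := Finset.mem_inter.2
      ⟨(SimpleGraph.mem_neighborFinset G u v).2 hadj.symm, hv⟩
    have h1le : 1 ≤ d' u := Finset.card_pos.2 ⟨v, hvN⟩
    by_contra hne
    have h2u : 2 ≤ d' u := by omega
    obtain ⟨w, hwN, hwu⟩ := Finset.exists_mem_ne (by omega : 1 < d' v) u
    obtain ⟨x, hxN, hxv⟩ := Finset.exists_mem_ne (by omega : 1 < d' u) v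
    simp only [Finset.mem_inter, SimpleGraph.mem_neighborFinset] at hwN hxN
    by_cases hxw : x = w
    · subst hxw
      -- triangle v u x in S: v should be in A
      have : v ∈ A := Finset.mem_filter.2 ⟨hS'S hv,
        u, hS'S huS', x, hS'S hxN.2, hadj, hwN.1, hxN.1⟩
      exact (Finset.mem_sdiff.1 hv).2 this
    · -- path w v u x
      exact np w v u x (hS'S hwN.2) (hS'S hv) (hS'S huS') (hS'S hxN.2)
        hwN.1.ne' (fun h => hwu h) (fun h => hxw h.symm)
        hadj.ne (Ne.symm hxv) hxN.1.ne
        hwN.1.symm hadj hxN.1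
  -- centers, leaves, rest
  set C : Finset V := S'.filter (fun v => 2 ≤ d' v) with hC
  set L : Finset V := C.biUnion (fun c => G.neighborFinset c ∩ S') with hL
  have hCS' : C ⊆ S' := Finset.filter_subset _ _
  have hLS' : L ⊆ S' := by
    intro u hu
    obtain ⟨c, hc, hu⟩ := Finset.mem_biUnion.1 hu
    exact (Finset.mem_inter.1 hu).2
  have hL1 : ∀ u ∈ L, d' u = 1 := by
    intro u hu
    obtain ⟨c, hc, hu⟩ := Finset.mem_biUnion.1 hu
    obtain ⟨hcS', hc2⟩ := Finset.mem_filter.1 hc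
    obtain ⟨hcN, huS'⟩ := Finset.mem_inter.1 hu
    exact K c hcS' hc2 u ((SimpleGraph.mem_neighborFinset G c u).1 hcN) huS'
  have hCL : Disjoint C L := by
    rw [Finset.disjoint_left]
    intro u huC huL
    have := hL1 u huL
    have := (Finset.mem_filter.1 huC).2
    omega
  have hLcard : L.card = ∑ c ∈ C, d' c := by
    rw [hL]
    rw [Finset.card_biUnion]
    intro c1 h1 c2 h2 hne
    rw [Function.onFun, Finset.disjoint_left]
    intro u hu1 hu2
    obtain ⟨hN1, huS'⟩ := Finset.mem_inter.1 hu1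
    obtain ⟨hN2, _⟩ := Finset.mem_inter.1 hu2
    have hu1' : d' u = 1 := K c1 (Finset.mem_filter.1 h1).1 (Finset.mem_filter.1 h1).2 u
      ((SimpleGraph.mem_neighborFinset G c1 u).1 hN1) huS'
    have hsub : ({c1, c2} : Finset V) ⊆ G.neighborFinset u ∩ S' := by
      intro z hz
      simp only [Finset.mem_insert, Finset.mem_singleton] at hz
      rcases hz with rfl | rfl
      · exact Finset.mem_inter.2 ⟨(SimpleGraph.mem_neighborFinset G u z).2
          (((SimpleGraph.mem_neighborFinset G z u).1 hN1).symm), (Finset.mem_filter.1 h1).1⟩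
      · exact Finset.mem_inter.2 ⟨(SimpleGraph.mem_neighborFinset G u z).2
          (((SimpleGraph.mem_neighborFinset G z u).1 hN2).symm), (Finset.mem_filter.1 h2).1⟩
    have : ({c1, c2} : Finset V).card ≤ d' u := Finset.card_le_card hsub
    rw [Finset.card_insert_of_notMem (by simpa using hne), Finset.card_singleton] at this
    omega
  set rest : Finset V := (S' \ C) \ L with hrest
  have hLsub : L ⊆ S' \ C := by
    intro u hu
    exact Finset.mem_sdiff.2 ⟨hLS' hu, fun hc => Finset.disjoint_left.1 hCL hc hu⟩
  have hsplit1 : ∑ v ∈ S', d' v = ∑ v ∈ C, d' v + ∑ v ∈ S' \ C, d' v := by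
    rw [add_comm, Finset.sum_sdiff hCS']
  have hsplit2 : ∑ v ∈ S' \ C, d' v = ∑ v ∈ L, d' v + ∑ v ∈ rest, d' v := by
    rw [hrest, add_comm, Finset.sum_sdiff hLsub]
  have hsumL : ∑ v ∈ L, d' v = L.card := by
    rw [Finset.sum_congr rfl (fun v hv => hL1 v hv)]
    simp
  have hsumrest : ∑ v ∈ rest, d' v ≤ rest.card := by
    have : ∀ v ∈ rest, d' v ≤ 1 := by
      intro v hv
      have hvnC : v ∉ C := (Finset.mem_sdiff.1 ((Finset.mem_sdiff.1 hv).1)).2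
      have hvS' : v ∈ S' := (Finset.mem_sdiff.1 ((Finset.mem_sdiff.1 hv).1)).1
      by_contra h
      exact hvnC (Finset.mem_filter.2 ⟨hvS', by omega⟩)
    calc ∑ v ∈ rest, d' v ≤ ∑ v ∈ rest, 1 := Finset.sum_le_sum this
      _ = rest.card := by simp
  have hsumC : ∑ v ∈ C, d' v ≤ 3 * C.card := by
    calc ∑ v ∈ C, d' v ≤ ∑ v ∈ C, 3 := Finset.sum_le_sum (fun v _ => hd'le v)
      _ = 3 * C.card := by rw [Finset.sum_const]; ring
  have hcards : S'.card = C.card + (L.card + rest.card) := by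
    rw [← Finset.card_sdiff_add_card_eq_card hCS']
    rw [← Finset.card_sdiff_add_card_eq_card hLsub]
    rw [hrest]
    ring
  -- star forest bound
  have hstar : 2 * ∑ v ∈ S', d' v ≤ 3 * S'.card := by
    omega
  -- degree sums over S
  have hsumA : ∑ v ∈ A, d v = 2 * A.card := by
    rw [Finset.sum_congr rfl (fun v hv => show d v = 2 by
      obtain ⟨u, w, hu, hw, avu, avw, auw, hN⟩ := key v hv
      simp only [hd]
      rw [hN, Finset.card_insert_of_notMem (by simpa using auw.ne), Finset.card_singleton])]
    rw [Finset.sum_const]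
    ring
  have hsplitS : ∑ v ∈ S, d v = ∑ v ∈ A, d v + ∑ v ∈ S', d v := by
    rw [hS', add_comm, Finset.sum_sdiff hAS]
  have hDS' : ∑ v ∈ S', d v = ∑ v ∈ S', d' v :=
    Finset.sum_congr rfl (fun v hv => (hd'd v hv).symm)
  have hcardsS : S.card = A.card + S'.card := by
    rw [hS']
    rw [← Finset.card_sdiff_add_card_eq_card hAS]
    ring
  -- boundary double counting
  have hdc : ∑ v ∈ S, (G.neighborFinset v ∩ Sᶜ).card
      = ∑ u ∈ Sᶜ, (G.neighborFinset u ∩ S).card := by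
    have key2 : ∀ (Y : Finset V), ∀ v, (G.neighborFinset v ∩ Y).card
        = ∑ u ∈ Y, (if G.Adj v u then 1 else 0) := by
      intro Y v
      rw [← Finset.card_filter]
      congr 1
      ext u
      simp [SimpleGraph.mem_neighborFinset, and_comm]
    calc ∑ v ∈ S, (G.neighborFinset v ∩ Sᶜ).card
        = ∑ v ∈ S, ∑ u ∈ Sᶜ, (if G.Adj v u then 1 else 0) :=
          Finset.sum_congr rfl fun v _ => key2 Sᶜ v
      _ = ∑ u ∈ Sᶜ, ∑ v ∈ S, (if G.Adj v u then 1 else 0) := Finset.sum_comm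
      _ = ∑ u ∈ Sᶜ, (G.neighborFinset u ∩ S).card := by
          refine Finset.sum_congr rfl fun u _ => ?_
          rw [key2 S u]
          refine Finset.sum_congr rfl fun v _ => ?_
          simp [SimpleGraph.adj_comm]
  have hbd : ∑ u ∈ Sᶜ, (G.neighborFinset u ∩ S).card ≤ 3 * F.card := by
    have hSc : Sᶜ = F := by rw [hSdef, compl_compl]
    rw [hSc]
    calc ∑ u ∈ F, (G.neighborFinset u ∩ S).card ≤ ∑ u ∈ F, 3 :=
        Finset.sum_le_sum (fun u _ => by
          calc (G.neighborFinset u ∩ S).card ≤ (G.neighborFinset u).card :=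
              Finset.card_le_card Finset.inter_subset_left
            _ = 3 := deg3 u)
      _ = 3 * F.card := by rw [Finset.sum_const]; ring
  have hpartition : 3 * S.card = ∑ v ∈ S, d v + ∑ v ∈ S, (G.neighborFinset v ∩ Sᶜ).card := by
    rw [← Finset.sum_add_distrib]
    rw [Finset.sum_congr rfl (fun v _ => show d v + (G.neighborFinset v ∩ Sᶜ).card = 3 by
      simp only [hd]
      have he : G.neighborFinset v ∩ Sᶜ = G.neighborFinset v \ S := by
        ext x; simp [Finset.mem_sdiff]
      rw [he, Finset.card_inter_add_card_sdiff, deg3])]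
    rw [Finset.sum_const]
    ring
  have hcardV : S.card + F.card = Fintype.card V := by
    rw [hSdef, Finset.card_compl]
    have := Finset.card_le_univ F
    omega
  omega

lemma destruct_p4 {G : SimpleGraph V} {S : Set V}
    (h : HasPathOfOrder (G.induce S) 4) :
    ∃ a b c d : V, a ∈ S ∧ b ∈ S ∧ c ∈ S ∧ d ∈ S ∧
      a ≠ b ∧ a ≠ c ∧ a ≠ d ∧ b ≠ c ∧ b ≠ d ∧ c ≠ d ∧
      G.Adj a b ∧ G.Adj b c ∧ G.Adj c d := by
  obtain ⟨u, v, w, hp, hlen⟩ := h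
  match w, hp, hlen with
  | .cons (v := x) e1 (.cons (v := y) e2 (.cons e3 .nil)), hp, hlen =>
    rw [SimpleGraph.Walk.isPath_def] at hp
    simp only [Walk.support_cons, Walk.support_nil, List.nodup_cons, List.mem_cons,
      List.mem_singleton, List.not_mem_nil, or_false, List.nodup_nil, and_true,
      not_or] at hp
    refine ⟨u, x, y, v, u.2, x.2, y.2, v.2, ?_, ?_, ?_, ?_, ?_, ?_, e1, e2, e3⟩
    all_goals · simp only [Subtype.ext_iff] at hp ⊢; simp [Subtype.ext_iff]; tauto

-- cover from a defective part
lemma part_cover [Fintype V] [DecidableEq V] (G : SimpleGraph V) [DecidableRel G.Adj]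
    (W : Finset V) (hW : ∀ v ∈ W, ((G.neighborFinset v) ∩ W).card ≤ 1) :
    IsPathVertexCover G 4 (Finset.univ \ W) := by
  intro hpath
  have hset : ((↑(Finset.univ \ W) : Set V)ᶜ) = (↑W : Set V) := by
    simp [Finset.coe_sdiff, Set.compl_eq_univ_diff]
  rw [hset] at hpath
  obtain ⟨a, b, c, d, ha, hb, hc, hd, hab, hac, had, hbc, hbd, hcd, e1, e2, e3⟩ :=
    destruct_p4 hpath
  have hsub : ({a, c} : Finset V) ⊆ G.neighborFinset b ∩ W := by
    intro z hz
    simp only [Finset.mem_insert, Finset.mem_singleton] at hz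
    rcases hz with rfl | rfl
    · exact Finset.mem_inter.2 ⟨(G.mem_neighborFinset b z).2 e1.symm, ha⟩
    · exact Finset.mem_inter.2 ⟨(G.mem_neighborFinset b z).2 e2, hc⟩
  have h2 : ({a, c} : Finset V).card = 2 := by
    rw [Finset.card_insert_of_notMem (by simpa using hac), Finset.card_singleton]
  have := Finset.card_le_card hsub
  have := hW b hb
  omega

-- cover from triangle family
lemma tri_cover [Fintype V] [DecidableEq V] (G : SimpleGraph V) [DecidableRel G.Adj]
    (T : Finset (Finset V))
    (hT1 : ∀ s ∈ T, G.IsNClique 3 s)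
    (hT3 : ∀ s ∈ T, ∀ t ∈ T, s ≠ t → ∀ u ∈ s, ∀ v ∈ t, ¬G.Adj u v) :
    IsPathVertexCover G 4 (Finset.univ \ T.biUnion id) := by
  intro hpath
  have hset : ((↑(Finset.univ \ T.biUnion id) : Set V)ᶜ) = (↑(T.biUnion id) : Set V) := by
    simp [Finset.coe_sdiff, Set.compl_eq_univ_diff]
  rw [hset] at hpath
  obtain ⟨a, b, c, d, ha, hb, hc, hd, hab, hac, had, hbc, hbd, hcd, e1, e2, e3⟩ :=
    destruct_p4 hpath
  simp only [Finset.coe_biUnion, Set.mem_iUnion, Finset.mem_coe, id] at ha hb hc hd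
  obtain ⟨sa, hsa, ha⟩ := ha
  obtain ⟨sb, hsb, hb⟩ := hb
  obtain ⟨sc, hsc, hc⟩ := hc
  obtain ⟨sd, hsd, hd⟩ := hd
  have same : ∀ s ∈ T, ∀ t ∈ T, ∀ u ∈ s, ∀ v ∈ t, G.Adj u v → s = t := by
    intro s hs t ht u hu v hv hadj
    by_contra hne
    exact hT3 s hs t ht hne u hu v hv hadj
  have hba : sa = sb := same sa hsa sb hsb a ha b hb e1
  have hbc' : sb = sc := same sb hsb sc hsc b hb c hc e2
  have hcd' : sc = sd := same sc hsc sd hsd c hc d hd e3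
  subst hba; subst hbc'; subst hcd'
  have hsub : ({a, b, c, d} : Finset V) ⊆ sa := by
    intro z hz
    simp only [Finset.mem_insert, Finset.mem_singleton] at hz
    rcases hz with rfl | rfl | rfl | rfl <;> assumption
  have h4 : ({a, b, c, d} : Finset V).card = 4 := by
    rw [Finset.card_insert_of_notMem (by simp [hab, hac, had]),
      Finset.card_insert_of_notMem (by simp [hbc, hbd]),
      Finset.card_insert_of_notMem (by simpa using hcd), Finset.card_singleton]
  have := Finset.card_le_card hsub
  have := (hT1 sa hsa).2
  omega

lemma psi_exists [Fintype V] [DecidableEq V] (G : SimpleGraph V) [DecidableRel G.Adj] :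
    ∃ F : Finset V, IsPathVertexCover G 4 F ∧ F.card = psi G 4 := by
  have hne : {n | ∃ F : Finset V, IsPathVertexCover G 4 F ∧ F.card = n}.Nonempty := by
    refine ⟨(Finset.univ : Finset V).card, Finset.univ, ?_, rfl⟩
    intro hpath
    obtain ⟨u, v, w, _, _⟩ := hpath
    have := u.2
    simp at this
  exact Nat.sInf_mem hne

end Helpers

/-- On a cubic graph: given a defective partition `(V¹, V²)` (each vertex has
at most one neighbor in its own part), a maximum-size family of pairwise
disjoint, pairwise non-adjacent triangles of size `t*`, and a family `T` of
such triangles with `6|T| ≥ 5t*`, both `F₁ = V ∖ Vⁱ` (with `Vⁱ` the larger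
part) and `F₂ = V` minus the vertices on triangles of `T` are `4`-path vertex
covers, and `min{|F₁|, |F₂|} ≤ (15/8)·ψ₄(G)`. -/
theorem stmt_10 {V : Type*} [Fintype V] [DecidableEq V] (G : SimpleGraph V)
    [DecidableRel G.Adj] (hcubic : G.IsRegularOfDegree 3)
    (V1 V2 : Finset V) (hpart : V1 ∪ V2 = Finset.univ) (hdisj : Disjoint V1 V2)
    (h1 : ∀ v ∈ V1, ((G.neighborFinset v) ∩ V1).card ≤ 1)
    (h2 : ∀ v ∈ V2, ((G.neighborFinset v) ∩ V2).card ≤ 1)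
    (tstar : ℕ)
    (htstar : IsGreatest {n | ∃ T : Finset (Finset V),
        (∀ s ∈ T, G.IsNClique 3 s) ∧
        (∀ s ∈ T, ∀ t ∈ T, s ≠ t → Disjoint s t) ∧
        (∀ s ∈ T, ∀ t ∈ T, s ≠ t → ∀ u ∈ s, ∀ v ∈ t, ¬G.Adj u v) ∧
        T.card = n} tstar)
    (T : Finset (Finset V))
    (hT1 : ∀ s ∈ T, G.IsNClique 3 s)
    (hT2 : ∀ s ∈ T, ∀ t ∈ T, s ≠ t → Disjoint s t)
    (hT3 : ∀ s ∈ T, ∀ t ∈ T, s ≠ t → ∀ u ∈ s, ∀ v ∈ t, ¬G.Adj u v)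
    (hT4 : 5 * tstar ≤ 6 * T.card)
    (F1 F2 : Finset V)
    (hF1 : F1 = Finset.univ \ (if V2.card ≤ V1.card then V1 else V2))
    (hF2 : F2 = Finset.univ \ T.biUnion id) :
    IsPathVertexCover G 4 F1 ∧ IsPathVertexCover G 4 F2 ∧
      (min F1.card F2.card : ℝ) ≤ 15 / 8 * (psi G 4 : ℝ) := by
  classical
  have hcov1 : IsPathVertexCover G 4 F1 := by
    rw [hF1]
    split_ifs with h
    · exact part_cover G V1 h1
    · exact part_cover G V2 h2
  have hcov2 : IsPathVertexCover G 4 F2 := by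
    rw [hF2]; exact tri_cover G T hT1 hT3
  obtain ⟨Fo, hFo, hFocard⟩ := psi_exists G
  have hub : ∀ 𝒯 : Finset (Finset V), (∀ s ∈ 𝒯, G.IsNClique 3 s) →
      (∀ s ∈ 𝒯, ∀ t ∈ 𝒯, s ≠ t → Disjoint s t) →
      (∀ s ∈ 𝒯, ∀ t ∈ 𝒯, s ≠ t → ∀ u ∈ s, ∀ v ∈ t, ¬G.Adj u v) → 𝒯.card ≤ tstar :=
    fun 𝒯 hc hd hn => htstar.2 ⟨𝒯, hc, hd, hn, rfl⟩
  have hlow : Fintype.card V ≤ 3 * psi G 4 + tstar := by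
    have := lower_bound G hcubic tstar hub Fo hFo
    omega
  have hn12 : V1.card + V2.card = Fintype.card V := by
    rw [← Finset.card_union_of_disjoint hdisj, hpart, Finset.card_univ]
  have hF1card : 2 * F1.card ≤ Fintype.card V := by
    rw [hF1]
    split_ifs with h
    · rw [Finset.card_sdiff_of_subset (Finset.subset_univ _), Finset.card_univ]
      omega
    · rw [Finset.card_sdiff_of_subset (Finset.subset_univ _), Finset.card_univ]
      omega
  have hbT : (T.biUnion id).card = 3 * T.card := by
    have hcb : (T.biUnion id).card = ∑ s ∈ T, (id s).card :=
      Finset.card_biUnion (fun s hs t ht hst => hT2 s hs t ht hst)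
    rw [hcb, Finset.sum_congr rfl (fun s hs => show (id s).card = 3 from (hT1 s hs).2)]
    rw [Finset.sum_const]
    ring
  have hF2card : F2.card + 3 * T.card = Fintype.card V := by
    have hle : (T.biUnion id).card ≤ Fintype.card V := by
      rw [← Finset.card_univ]; exact Finset.card_le_univ _
    rw [hF2, Finset.card_sdiff_of_subset (Finset.subset_univ _), Finset.card_univ]
    omega
  refine ⟨hcov1, hcov2, ?_⟩
  rcases le_or_gt (5 * tstar) (Fintype.card V) with hcase | hcase
  · have h8 : 8 * F1.card ≤ 15 * psi G 4 := by omega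
    calc (min F1.card F2.card : ℝ) ≤ (F1.card : ℝ) := by
          exact_mod_cast Nat.cast_le.2 (min_le_left _ _)
      _ ≤ 15 / 8 * (psi G 4 : ℝ) := by
          have : (8 * F1.card : ℝ) ≤ 15 * (psi G 4 : ℝ) := by exact_mod_cast h8
          linarith
  · have h8 : 8 * F2.card ≤ 15 * psi G 4 := by omega
    calc (min F1.card F2.card : ℝ) ≤ (F2.card : ℝ) := by
          exact_mod_cast Nat.cast_le.2 (min_le_right _ _)
      _ ≤ 15 / 8 * (psi G 4 : ℝ) := by
          have : (8 * F2.card : ℝ) ≤ 15 * (psi G 4 : ℝ) := by exact_mod_cast h8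
          linarith
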